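/- Let φ : Mat_d(ℂ) → Mat_r(ℂ) be a unital *-linear map such that for all Hermitian A, A ⪰ 0 iff φ(A) ⪰ 0. Suppose there is a unitary U ∈ Mat_r(ℂ) such that for all A, U*φ(A)U = [[A, γ(A)*],[γ(A), ψ(A)]] for some linear maps γ : Mat_d(ℂ) → Mat_{r−d,d}(ℂ) and ψ : Mat_d(ℂ) → Mat_{r−d}(ℂ) with ψ unital. Then γ = 0. -/

import Mathlib

open ComplexOrder Matrix

lemma aux_ker {d m : ℕ} {B : Matrix (Fin d) (Fin d) ℂ} {C : Matrix (Fin m) (Fin d) ℂ}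
    {D : Matrix (Fin m) (Fin m) ℂ}
    (h : (Matrix.fromBlocks B Cᴴ C D).PosSemidef) {x : Fin d → ℂ} (hx : B *ᵥ x = 0) :
    C *ᵥ x = 0 := by
  set z : (Fin d ⊕ Fin m) → ℂ := Sum.elim x 0 with hz
  have hmv : (Matrix.fromBlocks B Cᴴ C D) *ᵥ z = Sum.elim (0 : Fin d → ℂ) (C *ᵥ x) := by
    rw [hz, fromBlocks_mulVec]
    simp [hx]
  have h0 : star z ⬝ᵥ ((Matrix.fromBlocks B Cᴴ C D) *ᵥ z) = 0 := by
    rw [hmv, dotProduct_block]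
    simp [hz]
    have : star (x ⊕ᵥ (0 : Fin m → ℂ)) ∘ Sum.inr = 0 := by ext i; simp
    rw [this, zero_dotProduct]
  have := (h.dotProduct_mulVec_zero_iff z).mp h0
  rw [hmv] at this
  ext i
  exact congrFun this (Sum.inr i)

theorem stmt13 (d m : ℕ)
    (φ : Matrix (Fin d) (Fin d) ℂ →ₗ[ℂ] Matrix (Fin d ⊕ Fin m) (Fin d ⊕ Fin m) ℂ)
    (hstar : ∀ A, φ Aᴴ = (φ A)ᴴ) (hunital : φ 1 = 1)
    (hiso : ∀ A : Matrix (Fin d) (Fin d) ℂ, A.IsHermitian →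
      (A.PosSemidef ↔ (φ A).PosSemidef))
    (U : Matrix (Fin d ⊕ Fin m) (Fin d ⊕ Fin m) ℂ)
    (hU : U ∈ Matrix.unitaryGroup (Fin d ⊕ Fin m) ℂ)
    (γ : Matrix (Fin d) (Fin d) ℂ →ₗ[ℂ] Matrix (Fin m) (Fin d) ℂ)
    (ψ : Matrix (Fin d) (Fin d) ℂ →ₗ[ℂ] Matrix (Fin m) (Fin m) ℂ)
    (hψ : ψ 1 = 1)
    (hblock : ∀ A, star U * φ A * U = Matrix.fromBlocks A (γ A)ᴴ (γ A) (ψ A)) :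
    γ = 0 := by
  have hUstar : star U * U = 1 := (Unitary.mem_iff.mp hU).1
  -- γ 1 = 0
  have hγ1 : γ 1 = 0 := by
    have h1 : Matrix.fromBlocks 1 (γ 1)ᴴ (γ 1) (ψ 1) =
        (1 : Matrix (Fin d ⊕ Fin m) (Fin d ⊕ Fin m) ℂ) := by
      rw [← hblock 1, hunital, mul_one, hUstar]
    rw [← Matrix.fromBlocks_one] at h1
    have := congrArg Matrix.toBlocks₂₁ h1
    simp only [Matrix.toBlocks_fromBlocks₂₁] at this
    exact this
  -- the map A ↦ fromBlocks A (γ A)ᴴ (γ A) (ψ A) is psd when A is psd Hermitian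
  have hpsd : ∀ A : Matrix (Fin d) (Fin d) ℂ, A.IsHermitian → A.PosSemidef →
      (Matrix.fromBlocks A (γ A)ᴴ (γ A) (ψ A)).PosSemidef := by
    intro A hAh hA
    rw [← hblock A, Matrix.star_eq_conjTranspose]
    exact ((hiso A hAh).mp hA).conjTranspose_mul_mul_same U
  -- key: γ (vecMulVec v (star v)) = 0 for every vector v
  have key : ∀ v : Fin d → ℂ, γ (vecMulVec v (star v)) = 0 := by
    intro v
    by_cases hv : v = 0
    · have : vecMulVec v (star v) = 0 := by subst hv; ext i j; simp [vecMulVec_apply]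
      rw [this, map_zero]
    set P := vecMulVec v (star v) with hPdef
    set c := star v ⬝ᵥ v with hcdef
    have hcpos : 0 < c := dotProduct_star_self_pos_iff.mpr hv
    have hcne : c ≠ 0 := ne_of_gt hcpos
    have hcim : (starRingEnd ℂ) c = c := by
      have him : c.im = 0 := by
        have := Complex.lt_def.mp hcpos
        simpa using this.2.symm
      exact Complex.conj_eq_iff_im.mpr him
    have hPh : P.IsHermitian := by
      ext i j
      simp [hPdef, conjTranspose_apply, vecMulVec_apply, mul_comm]
    have hPapp : ∀ i j, P i j = v i * (starRingEnd ℂ) (v j) := by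
      intro i j; simp [hPdef, vecMulVec_apply]
    have hPmv : ∀ y : Fin d → ℂ, P *ᵥ y = (star v ⬝ᵥ y) • v := by
      intro y
      ext i
      simp only [mulVec, dotProduct, Pi.smul_apply, smul_eq_mul, hPdef, vecMulVec_apply,
        Pi.star_apply]
      rw [Finset.sum_mul]
      ring_nf
    have hPP : P * P = c • P := by
      ext i j
      simp only [mul_apply, Matrix.smul_apply, smul_eq_mul, hPdef, vecMulVec_apply, hcdef,
        dotProduct, Pi.star_apply]
      rw [Finset.sum_mul]
      exact Finset.sum_congr rfl fun k _ => by ring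
    have hPpsd : P.PosSemidef := by
      have h1 : P = replicateCol Unit v * (replicateCol Unit v)ᴴ := by
        rw [conjTranspose_replicateCol, hPdef, vecMulVec_eq Unit]
      rw [h1]
      exact posSemidef_self_mul_conjTranspose _
    -- the complementary projection
    set Q : Matrix (Fin d) (Fin d) ℂ := 1 - c⁻¹ • P with hQdef
    have hQh : Q.IsHermitian := by
      unfold Q
      rw [IsHermitian, conjTranspose_sub, conjTranspose_smul, conjTranspose_one, hPh.eq]
      simp [hcim]
    have hQQ : Q * Q = Q := by
      rw [hQdef, sub_mul, one_mul, mul_sub, mul_one, Matrix.smul_mul, Matrix.mul_smul, hPP,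
        smul_smul, smul_smul, mul_assoc, inv_mul_cancel₀ hcne, mul_one]
      abel
    have hQpsd : Q.PosSemidef := by
      have := posSemidef_conjTranspose_mul_self Q
      rwa [hQh.eq, hQQ] at this
    -- γ P kills the orthogonal complement of v
    have hker : ∀ w : Fin d → ℂ, P *ᵥ w = 0 → γ P *ᵥ w = 0 := fun w hw =>
      aux_ker (hpsd P hPh hPpsd) hw
    -- γ P kills v
    have hγQ : γ Q = -(c⁻¹) • γ P := by
      rw [hQdef, map_sub, LinearMap.map_smul, hγ1]
      simp
    have hQv : Q *ᵥ v = 0 := by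
      rw [hQdef, sub_mulVec, one_mulVec, smul_mulVec, hPmv, ← hcdef, smul_smul,
        inv_mul_cancel₀ hcne, one_smul, sub_self]
    have hkerv : γ P *ᵥ v = 0 := by
      have h2 : -(c⁻¹) • (γ P *ᵥ v) = 0 := by
        rw [← smul_mulVec, ← hγQ]
        exact aux_ker (hpsd Q hQh hQpsd) hQv
      have h3 := congrArg (fun y => (-c) • y) h2
      simp only [smul_smul, smul_zero] at h3
      rw [neg_mul_neg, mul_inv_cancel₀ hcne, one_smul] at h3
      exact h3
    -- hence γ P kills everything
    have hall : ∀ x : Fin d → ℂ, γ P *ᵥ x = 0 := by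
      intro x
      set a : ℂ := c⁻¹ * (star v ⬝ᵥ x) with hadef
      have hw : P *ᵥ (x - a • v) = 0 := by
        rw [mulVec_sub, mulVec_smul, hPmv, hPmv, ← hcdef, hadef]
        rw [smul_smul, mul_assoc, mul_comm (star v ⬝ᵥ x) c, ← mul_assoc,
          inv_mul_cancel₀ hcne, one_mul, sub_self]
      have h1 := hker _ hw
      rw [mulVec_sub, mulVec_smul, hkerv, smul_zero, sub_zero] at h1
      exact h1
    ext i j
    have := congrFun (hall (Pi.single j 1)) i
    simpa using this
  -- polarization: γ (vecMulVec x (star y)) = 0 for all x y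
  have pol : ∀ x y : Fin d → ℂ, γ (vecMulVec x (star y)) = 0 := by
    intro x y
    have hexp : ∀ a : ℂ, vecMulVec (x + a • y) (star (x + a • y)) =
        vecMulVec x (star x) + (starRingEnd ℂ a) • vecMulVec x (star y) +
        a • vecMulVec y (star x) + (a * starRingEnd ℂ a) • vecMulVec y (star y) := by
      intro a
      ext i j
      simp only [vecMulVec_apply, Pi.add_apply, Pi.star_apply, Pi.smul_apply, smul_eq_mul,
        Matrix.add_apply, Matrix.smul_apply, star_add, star_smul, RCLike.star_def, smul_eq_mul]
      ring
    have E : ∀ a : ℂ, (starRingEnd ℂ a) • γ (vecMulVec x (star y)) +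
        a • γ (vecMulVec y (star x)) = 0 := by
      intro a
      have h0 := key (x + a • y)
      rw [hexp a, map_add, map_add, map_add, LinearMap.map_smul, LinearMap.map_smul, LinearMap.map_smul,
        key x, key y] at h0
      rw [smul_zero, add_zero, zero_add] at h0
      exact h0
    have E1 := E 1
    have E2 := E Complex.I
    simp only [RingHom.map_one, one_smul, Complex.conj_I] at E1 E2
    ext i j
    have e1 := congrFun (congrFun (congrArg (fun M : Matrix (Fin m) (Fin d) ℂ => M) E1) i) j
    have e2 := congrFun (congrFun (congrArg (fun M : Matrix (Fin m) (Fin d) ℂ => M) E2) i) j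
    simp only [Matrix.add_apply, Matrix.smul_apply, smul_eq_mul, Matrix.zero_apply, neg_smul] at e1 e2
    set q := γ (vecMulVec x (star y)) i j
    set r := γ (vecMulVec y (star x)) i j
    show q = 0
    have e2' : -(Complex.I * q) + Complex.I * r = 0 := by
      simpa using e2
    linear_combination (1/2 : ℂ) * e1 + (Complex.I/2) * e2' + ((q - r)/2) * Complex.I_mul_I
  -- conclude
  have hstd : ∀ i j : Fin d, γ (Matrix.single i j 1) = 0 := by
    intro i j
    have hs : (star (Pi.single j 1 : Fin d → ℂ)) = Pi.single j 1 := by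
      ext k
      simp [Pi.single_apply, apply_ite (star : ℂ → ℂ)]
    rw [single_eq_single_vecMulVec_single, ← hs, pol]
  ext A i j
  rw [matrix_eq_sum_single A]
  simp only [LinearMap.zero_apply, Matrix.zero_apply]
  rw [map_sum]
  have : ∀ i' ∈ Finset.univ, γ (∑ j', Matrix.single i' j' (A i' j')) = 0 := by
    intro i' _
    rw [map_sum]
    apply Finset.sum_eq_zero
    intro j' _
    have : Matrix.single i' j' (A i' j') = A i' j' • Matrix.single i' j' 1 := by
      rw [smul_single, smul_eq_mul, mul_one]
    rw [this, LinearMap.map_smul, hstd, smul_zero]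
  rw [Finset.sum_congr rfl this]
  simp
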